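/- Let n ≥ 3 and let F ∈ M_n(ℂ) satisfy F·F̄ = -I_n. Then n is even and tr(F F*) > 2. -/

import Mathlib

open Matrix

theorem stmt_1 {n : ℕ} (hn : 3 ≤ n) (F : Matrix (Fin n) (Fin n) ℂ)
    (hF : F * F.map (starRingEnd ℂ) = -1) :
    Even n ∧ 2 < (Matrix.trace (F * Fᴴ)).re := by
  have hdet : F.det * (starRingEnd ℂ) F.det = (-1 : ℂ) ^ n := by
    have h := congrArg Matrix.det hF
    rw [Matrix.det_mul] at h
    have hmap : (F.map ⇑(starRingEnd ℂ)).det = (starRingEnd ℂ) F.det := by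
      rw [RingHom.map_det, RingHom.mapMatrix_apply]
    rw [hmap] at h
    simpa [Matrix.det_neg] using h
  have heven : Even n := by
    by_contra hodd
    have hno : Odd n := Nat.not_even_iff_odd.mp hodd
    rw [hno.neg_one_pow, Complex.mul_conj] at hdet
    have h := congrArg Complex.re hdet
    simp at h
    nlinarith [Complex.normSq_nonneg F.det, h]
  refine ⟨heven, ?_⟩
  -- trace of F * conj F is -n
  have hT : (∑ i, ∑ k, F i k * (starRingEnd ℂ) (F k i)) = -(n : ℂ) := by
    have htr : Matrix.trace (F * F.map (starRingEnd ℂ)) = -(n : ℂ) := by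
      rw [hF]; simp [Matrix.trace_neg, Matrix.trace_one]
    rw [← htr]
    simp [Matrix.trace, Matrix.mul_apply, Matrix.diag, Matrix.map_apply]
  set S : ℝ := ∑ i, ∑ k, Complex.normSq (F i k) with hSdef
  have hS : (Matrix.trace (F * Fᴴ)).re = S := by
    simp [Matrix.trace, Matrix.mul_apply, Matrix.diag, Matrix.conjTranspose_apply,
      Complex.mul_conj, hSdef, Complex.re_sum]
  have habs : (n : ℝ) ≤ ∑ i, ∑ k, ‖F i k * (starRingEnd ℂ) (F k i)‖ := by
    calc (n : ℝ) = ‖(-(n : ℂ))‖ := by simp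
    _ = ‖∑ i, ∑ k, F i k * (starRingEnd ℂ) (F k i)‖ := by rw [hT]
    _ ≤ ∑ i, ‖∑ k, F i k * (starRingEnd ℂ) (F k i)‖ :=
        norm_sum_le _ _
    _ ≤ ∑ i, ∑ k, ‖F i k * (starRingEnd ℂ) (F k i)‖ :=
        Finset.sum_le_sum fun i _ => norm_sum_le _ _
  have hbound : (2 : ℝ) * n ≤ ∑ i, ∑ k,
      (Complex.normSq (F i k) + Complex.normSq (F k i)) := by
    have hstep : ∑ i, ∑ k, (2 : ℝ) * ‖F i k * (starRingEnd ℂ) (F k i)‖ ≤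
        ∑ i, ∑ k, (Complex.normSq (F i k) + Complex.normSq (F k i)) := by
      refine Finset.sum_le_sum fun i _ => Finset.sum_le_sum fun k _ => ?_
      rw [norm_mul, Complex.norm_conj]
      have h1 := Complex.sq_norm (F i k)
      have h2 := Complex.sq_norm (F k i)
      nlinarith [sq_nonneg (‖F i k‖ - ‖F k i‖)]
    calc (2 : ℝ) * n ≤ 2 * ∑ i, ∑ k, ‖F i k * (starRingEnd ℂ) (F k i)‖ := by
          linarith
    _ = ∑ i, ∑ k, (2 : ℝ) * ‖F i k * (starRingEnd ℂ) (F k i)‖ := by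
          simp [Finset.mul_sum]
    _ ≤ _ := hstep
  have hsplit : ∑ i, ∑ k, (Complex.normSq (F i k) + Complex.normSq (F k i)) = 2 * S := by
    have hsym : ∑ i, ∑ k, Complex.normSq (F k i) = S := Finset.sum_comm
    simp_rw [Finset.sum_add_distrib]
    rw [hsym, ← hSdef]
    ring
  have hnS : (n : ℝ) ≤ S := by
    rw [hsplit] at hbound; linarith
  have hn3 : (3 : ℝ) ≤ (n : ℝ) := by exact_mod_cast hn
  rw [hS]; linarith
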